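/- Transitivity step in Lemma 3: let R be a domain satisfying the left Ore condition. Suppose X, X₁, Y₁, X₂, R₀ ∈ R are nonzero and the following equations hold for elements M, L, Q, M₁, Q₁, Y, Y₂ ∈ R: X·M = Y·R₀, X·L = Y·Q, X₁·M = Y₁·M₁, X₁·L = Y₁·Q₁, and X₂·M₁ = Y₂·R₀. Then X₂·Q₁ = Y₂·Q. -/
import Mathlib


/-- Transitivity step in Lemma 3: in a domain with the left Ore condition, if
`(L, R₀)` is a generalized divisor couple for `M` (via `X, Y, Q`), `M₁` lies
in the right divisor ideal paired with `L` (via `X₁, Y₁, Q₁`), and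
`X₂·M₁ = Y₂·R₀`, then `X₂·Q₁ = Y₂·Q`. -/
theorem divisor_couple_transitivity
    {R : Type*} [Ring R] [IsDomain R]
    (ore : ∀ a b : R, a ≠ 0 → b ≠ 0 → ∃ c d : R, c * a = d * b ∧ c * a ≠ 0)
    (X X₁ Y₁ X₂ R₀ M L Q M₁ Q₁ Y Y₂ : R)
    (hX : X ≠ 0) (hX₁ : X₁ ≠ 0) (hY₁ : Y₁ ≠ 0) (hX₂ : X₂ ≠ 0) (hR₀ : R₀ ≠ 0)
    (h1 : X * M = Y * R₀)
    (h2 : X * L = Y * Q)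
    (h3 : X₁ * M = Y₁ * M₁)
    (h4 : X₁ * L = Y₁ * Q₁)
    (h5 : X₂ * M₁ = Y₂ * R₀) :
    X₂ * Q₁ = Y₂ * Q := by
  obtain ⟨c, d, hcd, hcd0⟩ := ore X₁ X hX₁ hX
  have hc : c ≠ 0 := fun h => hcd0 (by simp [h])
  have hcY₁ : c * Y₁ ≠ 0 := mul_ne_zero hc hY₁
  obtain ⟨e, f, hef, hef0⟩ := ore (c * Y₁) X₂ hcY₁ hX₂
  have hf : f ≠ 0 := fun h => hef0 (hef.trans (by simp [h]))
  -- e * c * Y₁ * M₁ = e * d * Y * R₀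
  have k1 : e * (c * Y₁) * M₁ = e * d * (Y * R₀) := by
    calc e * (c * Y₁) * M₁ = e * (c * (Y₁ * M₁)) := by simp [mul_assoc]
      _ = e * (c * (X₁ * M)) := by rw [h3]
      _ = e * ((c * X₁) * M) := by simp [mul_assoc]
      _ = e * ((d * X) * M) := by rw [hcd]
      _ = e * d * (X * M) := by simp [mul_assoc]
      _ = e * d * (Y * R₀) := by rw [h1]
  -- and via X₂: f * Y₂ * R₀
  have k2 : e * (c * Y₁) * M₁ = f * Y₂ * R₀ := by
    rw [hef]; rw [mul_assoc, h5, mul_assoc]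
  have k3 : f * Y₂ = e * d * Y := by
    have : (f * Y₂ - e * d * Y) * R₀ = 0 := by
      rw [sub_mul, sub_eq_zero, ← k2, k1]; simp [mul_assoc]
    rcases mul_eq_zero.mp this with h | h
    · exact sub_eq_zero.mp h
    · exact absurd h hR₀
  have k4 : f * (X₂ * Q₁) = f * (Y₂ * Q) := by
    calc f * (X₂ * Q₁) = (f * X₂) * Q₁ := by simp [mul_assoc]
      _ = e * (c * Y₁) * Q₁ := by rw [hef]
      _ = e * (c * (Y₁ * Q₁)) := by simp [mul_assoc]
      _ = e * (c * (X₁ * L)) := by rw [h4]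
      _ = e * ((c * X₁) * L) := by simp [mul_assoc]
      _ = e * ((d * X) * L) := by rw [hcd]
      _ = e * d * (X * L) := by simp [mul_assoc]
      _ = e * d * (Y * Q) := by rw [h2]
      _ = (e * d * Y) * Q := by simp [mul_assoc]
      _ = (f * Y₂) * Q := by rw [k3]
      _ = f * (Y₂ * Q) := by simp [mul_assoc]
  exact mul_left_cancel₀ hf k4
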